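/- arXiv:math/0303362 — 3 statements merged into one kernel-verified Lean document; each statement's English description precedes it below -/
import Mathlib

section
/- For all integers m, n, p with m + n + p = 0, the identity [p+1][p][p−1][m−n] + [m+1][m][m−1][n−p] + [n+1][n][n−1][p−m] = 0 holds. -/
set_option maxHeartbeats 2000000

/-- The q-integer `[m] = (q^m - q^(-m))/(q - q⁻¹)`. -/
noncomputable def qInt (q : ℂ) (m : ℤ) : ℂ := (q ^ m - q ^ (-m)) / (q - q⁻¹)

/-- For all integers `m, n, p` with `m + n + p = 0`:
`[p+1][p][p−1][m−n] + [m+1][m][m−1][n−p] + [n+1][n][n−1][p−m] = 0`. -/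
theorem qInt_cubic_cyclic_identity (q : ℂ) (hq : q ≠ 0) (hq2 : q ^ 2 ≠ 1)
    (m n p : ℤ) (h : m + n + p = 0) :
    qInt q (p + 1) * qInt q p * qInt q (p - 1) * qInt q (m - n)
      + qInt q (m + 1) * qInt q m * qInt q (m - 1) * qInt q (n - p)
      + qInt q (n + 1) * qInt q n * qInt q (n - 1) * qInt q (p - m) = 0 := by
  have hp : p = -m - n := by omega
  subst hp
  have hd : q - q⁻¹ ≠ 0 := by
    intro hc
    apply hq2
    field_simp at hc
    linear_combination hc
  have hm : q ^ m ≠ 0 := zpow_ne_zero _ hq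
  have hn : q ^ n ≠ 0 := zpow_ne_zero _ hq
  simp only [qInt, div_mul_div_comm, ← add_div]
  rw [div_eq_zero_iff]
  left
  simp only [neg_add_rev, neg_sub, neg_neg, sub_neg_eq_add, zpow_add₀ hq,
    zpow_sub₀ hq, zpow_neg, zpow_one]
  generalize q ^ m = a at hm ⊢
  generalize q ^ n = b at hn ⊢
  have h1 : q * q⁻¹ = 1 := mul_inv_cancel₀ hq
  have h2 : a * a⁻¹ = 1 := mul_inv_cancel₀ hm
  have h3 : b * b⁻¹ = 1 := mul_inv_cancel₀ hn
  ring_nf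
  simp only [inv_inv]
  linear_combination (- a⁻¹ ^ 2 * b⁻¹ ^ 4 + a⁻¹ ^ 2 * b * b⁻¹ ^ 3 - a⁻¹ ^ 2 * b ^ 2 * b⁻¹ ^ 2 + a⁻¹ ^ 2 * b ^ 3 * b⁻¹ + a⁻¹ ^ 4 * b⁻¹ ^ 2 - a⁻¹ ^ 4 * b * b⁻¹ ^ 3 - a * a⁻¹ ^ 3 * b⁻¹ ^ 2 + a * a⁻¹ ^ 3 * b⁻¹ ^ 4 - a * a⁻¹ ^ 3 * b ^ 2 + a * a⁻¹ ^ 3 * b ^ 2 * b⁻¹ ^ 2 + a ^ 2 * b * b⁻¹ ^ 3 - a ^ 2 * b ^ 2 * b⁻¹ ^ 2 + a ^ 2 * b ^ 3 * b⁻¹ - a ^ 2 * b ^ 4 + a ^ 2 * a⁻¹ ^ 2 * b⁻¹ ^ 2 - a ^ 2 * a⁻¹ ^ 2 * b * b⁻¹ ^ 3 + a ^ 2 * a⁻¹ ^ 2 * b ^ 2 - a ^ 2 * a⁻¹ ^ 2 * b ^ 3 * b⁻¹ - a ^ 3 * a⁻¹ * b⁻¹ ^ 2 - a ^ 3 * a⁻¹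 * b ^ 2 + a ^ 3 * a⁻¹ * b ^ 2 * b⁻¹ ^ 2 + a ^ 3 * a⁻¹ * b ^ 4 + a ^ 4 * b ^ 2 - a ^ 4 * b ^ 3 * b⁻¹) * h1
      + (b⁻¹ ^ 2 - b * b⁻¹ ^ 3 + b ^ 2 - b ^ 3 * b⁻¹ - a⁻¹ ^ 2 * b⁻¹ ^ 2 + a⁻¹ ^ 2 * b⁻¹ ^ 4 - a⁻¹ ^ 2 * b ^ 2 + a⁻¹ ^ 2 * b ^ 2 * b⁻¹ ^ 2 + a * a⁻¹ * b⁻¹ ^ 2 - a * a⁻¹ * b * b⁻¹ ^ 3 + a * a⁻¹ * b ^ 2 - a * a⁻¹ * b ^ 3 * b⁻¹ - a ^ 2 * b⁻¹ ^ 2 - a ^ 2 * b ^ 2 + a ^ 2 * b ^ 2 * b⁻¹ ^ 2 + a ^ 2 * b ^ 4 + q⁻¹ ^ 2 * b⁻¹ ^ 2 - q⁻¹ ^ 2 * b * b⁻¹ ^ 3 + q⁻¹ ^ 2 * b ^ 2 - q⁻¹ ^ 2 * b ^ 3 * b⁻¹ - q⁻¹ ^ 2 * a⁻¹ ^ 2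 * b⁻¹ ^ 2 + q⁻¹ ^ 2 * a⁻¹ ^ 2 * b ^ 2 * b⁻¹ ^ 2 + q⁻¹ ^ 2 * a * a⁻¹ * b⁻¹ ^ 2 - q⁻¹ ^ 2 * a * a⁻¹ * b * b⁻¹ ^ 3 + q⁻¹ ^ 2 * a * a⁻¹ * b ^ 2 - q⁻¹ ^ 2 * a * a⁻¹ * b ^ 3 * b⁻¹ - q⁻¹ ^ 2 * a ^ 2 * b ^ 2 + q⁻¹ ^ 2 * a ^ 2 * b ^ 2 * b⁻¹ ^ 2 + q ^ 2 * b⁻¹ ^ 2 - q ^ 2 * b * b⁻¹ ^ 3 + q ^ 2 * b ^ 2 - q ^ 2 * b ^ 3 * b⁻¹ - q ^ 2 * a⁻¹ ^ 2 * b⁻¹ ^ 2 + q ^ 2 * a⁻¹ ^ 2 * b ^ 2 * b⁻¹ ^ 2 + q ^ 2 * a * a⁻¹ * b⁻¹ ^ 2 - q ^ 2 * a * a⁻¹ * b * b⁻¹ ^ 3 + q ^ 2 * a * a⁻¹ * b ^ 2 - q ^ 2 * a * a⁻¹ * b ^ 3 * b⁻¹ - q ^ 2 * a ^ 2 * b ^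 2 + q ^ 2 * a ^ 2 * b ^ 2 * b⁻¹ ^ 2) * h2
      + (- b⁻¹ ^ 2 - b ^ 2 + a⁻¹ ^ 2 * b⁻¹ ^ 2 + a⁻¹ ^ 2 * b ^ 2 - a⁻¹ ^ 4 * b⁻¹ ^ 2 + a ^ 2 * b⁻¹ ^ 2 + a ^ 2 * b ^ 2 - a ^ 4 * b ^ 2 - q⁻¹ ^ 2 * b⁻¹ ^ 2 - q⁻¹ ^ 2 * b ^ 2 + q⁻¹ ^ 2 * a⁻¹ ^ 2 * b⁻¹ ^ 2 + q⁻¹ ^ 2 * a ^ 2 * b ^ 2 - q ^ 2 * b⁻¹ ^ 2 - q ^ 2 * b ^ 2 + q ^ 2 * a⁻¹ ^ 2 * b⁻¹ ^ 2 + q ^ 2 * a ^ 2 * b ^ 2) * h3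
end

section
/- For all integers m and n, the identity [m+1][m][m−1][2n+m] − [m+n−1][m+n][m+n+1][m−n] − [n+1][n][n−1][n+2m] = 0 holds. -/
set_option maxHeartbeats 4000000 in
/-- For all integers `m` and `n`:
`[m+1][m][m−1][2n+m] − [m+n−1][m+n][m+n+1][m−n] − [n+1][n][n−1][n+2m] = 0`. -/
theorem qInt_two_variable_identity (q : ℂ) (hq : q ≠ 0) (hq2 : q ^ 2 ≠ 1) (m n : ℤ) :
    qInt q (m + 1) * qInt q m * qInt q (m - 1) * qInt q (2 * n + m)
      - qInt q (m + n - 1) * qInt q (m + n) * qInt q (m + n + 1) * qInt q (m - n)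
      - qInt q (n + 1) * qInt q n * qInt q (n - 1) * qInt q (n + 2 * m) = 0 := by
  have ha : q ^ m ≠ 0 := zpow_ne_zero _ hq
  have hb : q ^ n ≠ 0 := zpow_ne_zero _ hq
  simp only [qInt, two_mul, neg_add, neg_sub, neg_neg, zpow_add₀ hq, zpow_sub₀ hq,
    zpow_neg, zpow_one]
  simp only [div_mul_div_comm]
  rw [div_sub_div_same, div_sub_div_same, div_eq_zero_iff]
  left
  field_simp
  ring
end

section
/- Define, for each integer n, the ℂ-linear operator ℓ_n = −z^{n+1}∂_q τ on ℂ[z, z^{−1}], i.e., ℓ_n(z^k) = −q^k[k]·z^{n+k} for all k ∈ ℤ. Then for all integers m and n, the q-bracket relation q^{m−n}·ℓ_m∘ℓ_n − q^{n−m}·ℓ_n∘ℓ_m = [m−n]·ℓ_{m+n} holds as an identity of linear operators on ℂ[z, z^{−1}]. -/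
/-- The operator `ℓ_n = −z^{n+1}∂_q τ` on `ℂ[z,z⁻¹]`, i.e. the `ℂ`-linear map with
`ℓ_n(z^k) = −q^k·[k]·z^{n+k}` for all `k ∈ ℤ`. -/
noncomputable def ell (q : ℂ) (n : ℤ) : LaurentPolynomial ℂ →ₗ[ℂ] LaurentPolynomial ℂ :=
  (AddMonoidAlgebra.coeffLinearEquiv ℂ).symm.toLinearMap ∘ₗ
    (Finsupp.lsum ℂ fun k => (-(q ^ k * qInt q k)) • Finsupp.lsingle (n + k)) ∘ₗ
      (AddMonoidAlgebra.coeffLinearEquiv ℂ).toLinearMap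

lemma ell_single (q : ℂ) (n k : ℤ) (a : ℂ) :
    ell q n (AddMonoidAlgebra.single k a)
      = (-(q ^ k * qInt q k)) • AddMonoidAlgebra.single (n + k) a := by
  show (AddMonoidAlgebra.coeffLinearEquiv ℂ).symm
    (Finsupp.lsum ℂ (fun k => (-(q ^ k * qInt q k)) • Finsupp.lsingle (n + k))
      (Finsupp.single k a)) = _
  rw [Finsupp.lsum_single]
  rfl

lemma key (q : ℂ) (hq : q ≠ 0) (a b : ℤ) :
    q ^ a * qInt q b - q ^ b * qInt q a = qInt q (b - a) := by
  have e : q ^ a * (q ^ b - q ^ (-b)) - q ^ b * (q ^ a - q ^ (-a))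
      = q ^ (b - a) - q ^ (a - b) := by
    rw [mul_sub, mul_sub, ← zpow_add₀ hq, ← zpow_add₀ hq, ← zpow_add₀ hq, ← zpow_add₀ hq]
    simp only [← sub_eq_add_neg]
    ring_nf
  rw [qInt, qInt, qInt, mul_div_assoc', mul_div_assoc', ← sub_div, e, neg_sub]

/-- The q-bracket relation `q^{m−n}·ℓ_m∘ℓ_n − q^{n−m}·ℓ_n∘ℓ_m = [m−n]·ℓ_{m+n}`
as an identity of linear operators on `ℂ[z,z⁻¹]`. -/
theorem ell_qBracket (q : ℂ) (hq : q ≠ 0) (hq2 : q ^ 2 ≠ 1) (m n : ℤ) :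
    q ^ (m - n) • (ell q m ∘ₗ ell q n) - q ^ (n - m) • (ell q n ∘ₗ ell q m)
      = qInt q (m - n) • ell q (m + n) := by
  apply LinearMap.ext; intro f
  induction f using AddMonoidAlgebra.induction_linear with
  | zero => simp
  | add f g hf hg => simp only [map_add] at *; rw [hf, hg]
  | single k a =>
    simp only [LinearMap.sub_apply, LinearMap.smul_apply, LinearMap.comp_apply]
    rw [ell_single q n k a, ell_single q m k a, map_smul, map_smul,
      ell_single q m (n + k), ell_single q n (m + k), ell_single q (m + n) k a]
    rw [smul_smul, smul_smul, smul_smul, smul_smul, smul_smul]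
    rw [show m + (n + k) = m + n + k by ring, show n + (m + k) = m + n + k by ring,
      ← sub_smul]
    congr 1
    have h1 : q ^ (m - n) * q ^ (n + k) = q ^ (m + k) := by
      rw [← zpow_add₀ hq]; ring_nf
    have h2 : q ^ (n - m) * q ^ (m + k) = q ^ (n + k) := by
      rw [← zpow_add₀ hq]; ring_nf
    have hk := key q hq (n + k) (m + k)
    rw [show (m + k) - (n + k) = m - n by ring] at hk
    linear_combination (q ^ k * qInt q k * qInt q (n + k)) * h1
      - (q ^ k * qInt q k * qInt q (m + k)) * h2 - (q ^ k * qInt q k) * hk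
end
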